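/- For nonincreasing nonnegative integer vectors satisfying n_1 ≺ m_1 ≺ n_2 ≺ m_2 (all with equal sum N), the runtime expression T(n,m) = (∑_{k=0}^M X_k(m)) · α_n · α_m satisfies T(n_1, m_1) ≥ T(n_2, m_2). -/

import Mathlib

open Finset

/-- Majorization of integer vectors via partial-sum domination with equal total sums. -/
def Maj {M : ℕ} (x y : Fin M → ℕ) : Prop :=
  (∀ k : ℕ, k < M → ∑ i ∈ univ.filter (fun i : Fin M => (i : ℕ) < k), x i ≤
      ∑ i ∈ univ.filter (fun i : Fin M => (i : ℕ) < k), y i) ∧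
    ∑ i, x i = ∑ i, y i

/-- Elementary symmetric polynomial of degree `k` (with `X_0 = 1`). -/
def esymm {M : ℕ} (k : ℕ) (n : Fin M → ℕ) : ℕ :=
  ∑ S ∈ (univ : Finset (Fin M)).powersetCard k, ∏ i ∈ S, n i

/-- Number of nonzero entries. -/
def alpha {M : ℕ} (n : Fin M → ℕ) : ℕ :=
  (univ.filter (fun i : Fin M => n i ≠ 0)).card

/-- The runtime expression `T(n, m) = (∑_{k=0}^M X_k(m)) · α_n · α_m`. -/
def T {M : ℕ} (n m : Fin M → ℕ) : ℕ :=
  (∑ k ∈ Finset.range (M + 1), esymm k m) * alpha n * alpha m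

namespace RuntimeAux

variable {M : ℕ}

/-- Prefix sum. -/
def pref (x : Fin M → ℕ) (k : ℕ) : ℕ :=
  ∑ i ∈ univ.filter (fun i : Fin M => (i : ℕ) < k), x i

lemma maj_trans {x y z : Fin M → ℕ} (h : Maj x y) (h' : Maj y z) : Maj x z :=
  ⟨fun k hk => (h.1 k hk).trans (h'.1 k hk), h.2.trans h'.2⟩

lemma pref_le_of_maj {x y : Fin M → ℕ} (h : Maj x y) (k : ℕ) :
    pref x k ≤ pref y k := by
  rcases lt_or_ge k M with hk | hk
  · exact h.1 k hk
  · have hf : univ.filter (fun i : Fin M => (i : ℕ) < k) = univ := by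
      ext i
      simp only [mem_filter, mem_univ, true_and, iff_true]
      exact lt_of_lt_of_le i.isLt hk
    unfold pref
    rw [hf]
    exact le_of_eq h.2

lemma pref_succ (x : Fin M → ℕ) (t : Fin M) :
    pref x ((t : ℕ) + 1) = pref x (t : ℕ) + x t := by
  unfold pref
  have hins : univ.filter (fun i : Fin M => (i : ℕ) < (t : ℕ) + 1)
      = insert t (univ.filter (fun i : Fin M => (i : ℕ) < (t : ℕ))) := by
    ext i
    simp only [mem_filter, mem_univ, true_and, mem_insert, Fin.ext_iff]
    omega
  rw [hins, Finset.sum_insert (by simp)]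
  ring

/-- Key Schur-concavity lemma for the product `∏ (· + 1)`. -/
lemma prod_le_of_maj_aux (x : Fin M → ℕ) (hx : Antitone x) :
    ∀ s : ℕ, ∀ y : Fin M → ℕ, (∑ i : Fin M, (M - (i : ℕ)) * y i) = s → Maj x y →
      ∏ i, (y i + 1) ≤ ∏ i, (x i + 1) := by
  intro s
  induction s using Nat.strong_induction_on with
  | _ s ih =>
    intro y hs hmaj
    by_cases hxy : x = y
    · rw [hxy]
    · -- j : first index where they differ
      have hD : (univ.filter (fun i : Fin M => x i ≠ y i)).Nonempty := by
        rcases Function.ne_iff.mp hxy with ⟨i, hi⟩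
        exact ⟨i, by simp [hi]⟩
      set j := (univ.filter (fun i : Fin M => x i ≠ y i)).min' hD with hjdef
      have hjmem : x j ≠ y j := by
        have h := Finset.min'_mem _ hD
        rw [← hjdef, mem_filter] at h
        exact h.2
      have hjmin : ∀ i : Fin M, x i ≠ y i → j ≤ i := by
        intro i hi
        exact Finset.min'_le _ _ (by simp [hi])
      have hbelow : ∀ i : Fin M, i < j → x i = y i := by
        intro i hi
        by_contra hne
        exact absurd (hjmin i hne) (not_le.mpr hi)
      -- prefix sums agree up to j
      have hpe : pref x (j : ℕ) = pref y (j : ℕ) := by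
        apply Finset.sum_congr rfl
        intro i hi
        simp only [mem_filter, mem_univ, true_and] at hi
        exact hbelow i (by exact_mod_cast hi)
      -- x j < y j
      have hxjyj : x j < y j := by
        have h1 : pref x ((j : ℕ) + 1) ≤ pref y ((j : ℕ) + 1) := pref_le_of_maj hmaj _
        rw [pref_succ, pref_succ, hpe] at h1
        have : x j ≤ y j := by omega
        exact lt_of_le_of_ne this hjmem
      -- k : first index after j where x exceeds y
      have hK : (univ.filter (fun i : Fin M => j < i ∧ y i < x i)).Nonempty := by
        by_contra hK
        rw [Finset.not_nonempty_iff_eq_empty, Finset.filter_eq_empty_iff] at hK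
        have hle : ∀ i : Fin M, x i ≤ y i := by
          intro i
          rcases lt_trichotomy i j with h | h | h
          · exact le_of_eq (hbelow i h)
          · rw [h]; exact hxjyj.le
          · have := hK (mem_univ i)
            push_neg at this
            exact this h
        have : ∑ i, x i < ∑ i, y i :=
          Finset.sum_lt_sum (fun i _ => hle i) ⟨j, mem_univ j, hxjyj⟩
        exact absurd hmaj.2 (ne_of_lt this)
      set k := (univ.filter (fun i : Fin M => j < i ∧ y i < x i)).min' hK with hkdef
      have hkmem : j < k ∧ y k < x k := by
        have h := Finset.min'_mem _ hK
        rw [← hkdef, mem_filter] at h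
        exact h.2
      have hjk : j < k := hkmem.1
      have hyxk : y k < x k := hkmem.2
      have hmid : ∀ i : Fin M, j < i → i < k → x i ≤ y i := by
        intro i hji hik
        by_contra hne
        push_neg at hne
        have : k ≤ i := Finset.min'_le _ _ (by simp [hji, hne])
        exact absurd hik (not_lt.mpr this)
      have hyjk : y k + 2 ≤ y j := by
        have h1 : x k ≤ x j := hx hjk.le
        omega
      have hyj1 : 1 ≤ y j := by omega
      -- the transfer
      set y' : Fin M → ℕ := fun i => if i = j then y j - 1 else if i = k then y k + 1 else y i
        with hy'def
      have hjkne : j ≠ k := ne_of_lt hjk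
      have hji : y' j = y j - 1 := by simp [hy'def]
      have hki : y' k = y k + 1 := by simp [hy'def, Ne.symm hjkne]
      have hoi : ∀ i : Fin M, i ≠ j → i ≠ k → y' i = y i := by
        intro i h1 h2
        simp [hy'def, h1, h2]
      have hpt : ∀ i : Fin M, y' i + (if i = j then 1 else 0)
          = y i + (if i = k then 1 else 0) := by
        intro i
        by_cases h1 : i = j
        · rw [h1, hji, if_pos rfl, if_neg hjkne]
          omega
        · by_cases h2 : i = k
          · rw [h2, hki, if_neg (Ne.symm hjkne), if_pos rfl]
          · rw [hoi i h1 h2, if_neg h1, if_neg h2]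
      have hsum : ∀ sfin : Finset (Fin M), (∑ i ∈ sfin, y' i) + (if j ∈ sfin then 1 else 0)
          = (∑ i ∈ sfin, y i) + (if k ∈ sfin then 1 else 0) := by
        intro sfin
        have hc : ∑ i ∈ sfin, (y' i + (if i = j then 1 else 0))
            = ∑ i ∈ sfin, (y i + (if i = k then 1 else 0)) :=
          Finset.sum_congr rfl (fun i _ => hpt i)
        rw [Finset.sum_add_distrib, Finset.sum_add_distrib,
          Finset.sum_ite_eq' sfin j (fun _ => 1), Finset.sum_ite_eq' sfin k (fun _ => 1)] at hc
        exact hc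
      have hsumtot : ∑ i, y' i = ∑ i, y i := by
        have := hsum univ
        simpa using this
      -- Maj x y'
      have hmaj' : Maj x y' := by
        constructor
        · intro t ht
          have hst := hsum (univ.filter (fun i : Fin M => (i : ℕ) < t))
          have hjmem' : (j ∈ univ.filter (fun i : Fin M => (i : ℕ) < t)) ↔ (j : ℕ) < t := by
            simp
          have hkmem' : (k ∈ univ.filter (fun i : Fin M => (i : ℕ) < t)) ↔ (k : ℕ) < t := by
            simp
          rcases le_or_gt t (j : ℕ) with h1 | h1
          · -- t ≤ j : neither j nor k in the prefix
            have hj' : ¬ (j : ℕ) < t := by omega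
            have hk' : ¬ (k : ℕ) < t := by
              have : (j : ℕ) < (k : ℕ) := hjk
              omega
            rw [if_neg (by rw [hjmem']; exact hj'), if_neg (by rw [hkmem']; exact hk')] at hst
            have := hmaj.1 t ht
            omega
          · rcases le_or_gt t (k : ℕ) with h2 | h2
            · -- j < t ≤ k
              have hj' : (j : ℕ) < t := h1
              have hk' : ¬ (k : ℕ) < t := by omega
              rw [if_pos (hjmem'.mpr hj'), if_neg (by rw [hkmem']; exact hk')] at hst
              -- strict inequality on the prefix of x vs y
              have hstrict : (∑ i ∈ univ.filter (fun i : Fin M => (i : ℕ) < t), x i)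
                  < ∑ i ∈ univ.filter (fun i : Fin M => (i : ℕ) < t), y i := by
                apply Finset.sum_lt_sum
                · intro i hi
                  simp only [mem_filter, mem_univ, true_and] at hi
                  rcases lt_trichotomy i j with h | h | h
                  · exact le_of_eq (hbelow i h)
                  · rw [h]; exact hxjyj.le
                  · apply hmid i h
                    have : (i : ℕ) < t := hi
                    have : (i : ℕ) ≤ (k : ℕ) := by omega
                    rcases lt_or_eq_of_le this with h' | h'
                    · exact h'
                    · exfalso
                      have : i = k := Fin.ext h'
                      omega
                · exact ⟨j, hjmem'.mpr hj', hxjyj⟩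
              omega
            · -- k < t : both in prefix
              rw [if_pos (hjmem'.mpr (by omega)), if_pos (hkmem'.mpr h2)] at hst
              have := hmaj.1 t ht
              omega
        · rw [hsumtot]; exact hmaj.2
      -- measure strictly decreases
      have hmeas : (∑ i : Fin M, (M - (i : ℕ)) * y' i) < s := by
        have hpt2 : ∀ i : Fin M, (M - (i : ℕ)) * y' i + (if i = j then M - (j : ℕ) else 0)
            = (M - (i : ℕ)) * y i + (if i = k then M - (k : ℕ) else 0) := by
          intro i
          by_cases h1 : i = j
          · rw [h1, hji, if_pos rfl, if_neg hjkne]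
            have hh : y j - 1 + 1 = y j := by omega
            calc (M - (j : ℕ)) * (y j - 1) + (M - (j : ℕ))
                = (M - (j : ℕ)) * ((y j - 1) + 1) := by ring
              _ = (M - (j : ℕ)) * y j + 0 := by rw [hh]; ring
          · by_cases h2 : i = k
            · rw [h2, hki, if_neg (Ne.symm hjkne), if_pos rfl]
              ring
            · rw [hoi i h1 h2, if_neg h1, if_neg h2]
        have hc : ∑ i : Fin M, ((M - (i : ℕ)) * y' i + (if i = j then M - (j : ℕ) else 0))
            = ∑ i : Fin M, ((M - (i : ℕ)) * y i + (if i = k then M - (k : ℕ) else 0)) :=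
          Finset.sum_congr rfl (fun i _ => hpt2 i)
        rw [Finset.sum_add_distrib, Finset.sum_add_distrib,
          Finset.sum_ite_eq' univ j (fun _ => M - (j : ℕ)),
          Finset.sum_ite_eq' univ k (fun _ => M - (k : ℕ)),
          if_pos (mem_univ j), if_pos (mem_univ k)] at hc
        have hkM : (k : ℕ) < M := k.isLt
        have hjklt : (j : ℕ) < (k : ℕ) := hjk
        omega
      -- product increases
      have hprod : ∏ i, (y i + 1) ≤ ∏ i, (y' i + 1) := by
        have hkmem2 : k ∈ univ.erase j := Finset.mem_erase.mpr ⟨Ne.symm hjkne, mem_univ k⟩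
        have hsplit : ∀ f : Fin M → ℕ, ∏ i, f i
            = f j * (f k * ∏ i ∈ (univ.erase j).erase k, f i) := by
          intro f
          rw [← Finset.mul_prod_erase univ f (mem_univ j),
            ← Finset.mul_prod_erase (univ.erase j) f hkmem2]
        rw [hsplit (fun i => y i + 1), hsplit (fun i => y' i + 1)]
        have hrest : ∏ i ∈ (univ.erase j).erase k, (y' i + 1)
            = ∏ i ∈ (univ.erase j).erase k, (y i + 1) := by
          apply Finset.prod_congr rfl
          intro i hi
          simp only [mem_erase] at hi
          rw [hoi i hi.2.1 hi.1]
        rw [hrest]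
        rw [hji, hki]
        have hfac : (y j + 1) * (y k + 1) ≤ (y j - 1 + 1) * (y k + 1 + 1) := by
          have : y j - 1 + 1 = y j := by omega
          rw [this]
          nlinarith [hyjk]
        calc (y j + 1) * ((y k + 1) * ∏ i ∈ (univ.erase j).erase k, (y i + 1))
            = ((y j + 1) * (y k + 1)) * ∏ i ∈ (univ.erase j).erase k, (y i + 1) := by ring
          _ ≤ ((y j - 1 + 1) * (y k + 1 + 1)) * ∏ i ∈ (univ.erase j).erase k, (y i + 1) :=
              Nat.mul_le_mul_right _ hfac
          _ = (y j - 1 + 1) * ((y k + 1 + 1) * ∏ i ∈ (univ.erase j).erase k, (y i + 1)) := by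
              ring
      calc ∏ i, (y i + 1) ≤ ∏ i, (y' i + 1) := hprod
        _ ≤ ∏ i, (x i + 1) := ih _ hmeas y' rfl hmaj'

lemma prod_le_of_maj {x y : Fin M → ℕ} (hx : Antitone x) (h : Maj x y) :
    ∏ i, (y i + 1) ≤ ∏ i, (x i + 1) :=
  prod_le_of_maj_aux x hx _ y rfl h

lemma alpha_le_of_maj {x y : Fin M → ℕ} (hx : Antitone x) (h : Maj x y) :
    alpha y ≤ alpha x := by
  set a := alpha x with hadef
  -- x vanishes from index a on
  have hxz : ∀ i : Fin M, a ≤ (i : ℕ) → x i = 0 := by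
    intro i hi
    by_contra hne
    -- then Iic i ⊆ nonzero set, so a ≥ i+1
    have hsub : Finset.Iic i ⊆ univ.filter (fun i : Fin M => x i ≠ 0) := by
      intro i' hi'
      simp only [Finset.mem_Iic] at hi'
      simp only [mem_filter, mem_univ, true_and]
      intro hz
      have : x i ≤ x i' := hx hi'
      omega
    have := Finset.card_le_card hsub
    rw [Fin.card_Iic] at this
    rw [hadef] at hi
    unfold alpha at hi
    omega
  -- prefix of x at a is the full sum
  have hprefx : pref x a = ∑ i, x i := by
    unfold pref
    rw [← Finset.sum_filter_add_sum_filter_not univ (fun i : Fin M => (i : ℕ) < a) x]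
    have : ∑ i ∈ univ.filter (fun i : Fin M => ¬ (i : ℕ) < a), x i = 0 := by
      apply Finset.sum_eq_zero
      intro i hi
      simp only [mem_filter, mem_univ, true_and, not_lt] at hi
      exact hxz i hi
    omega
  -- hence prefix of y at a is also full, so y vanishes from a on
  have hprefy : pref y a = ∑ i, y i := by
    have h1 : pref x a ≤ pref y a := pref_le_of_maj h a
    have h2 : pref y a ≤ ∑ i, y i := by
      unfold pref
      exact Finset.sum_le_sum_of_subset (Finset.filter_subset _ _)
    rw [hprefx, h.2] at h1
    omega
  have hyz : ∀ i : Fin M, a ≤ (i : ℕ) → y i = 0 := by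
    have : ∑ i ∈ univ.filter (fun i : Fin M => ¬ (i : ℕ) < a), y i = 0 := by
      have := Finset.sum_filter_add_sum_filter_not univ (fun i : Fin M => (i : ℕ) < a) y
      unfold pref at hprefy
      omega
    intro i hi
    have := Finset.sum_eq_zero_iff.mp this i (by simp; omega)
    exact this
  -- nonzero set of y lives in indices < a
  have hsub : univ.filter (fun i : Fin M => y i ≠ 0) ⊆
      univ.filter (fun i : Fin M => (i : ℕ) < a) := by
    intro i hi
    simp only [mem_filter, mem_univ, true_and] at hi ⊢
    by_contra h'
    exact hi (hyz i (by omega))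
  have h1 : alpha y ≤ (univ.filter (fun i : Fin M => (i : ℕ) < a)).card :=
    Finset.card_le_card hsub
  have h2 : (univ.filter (fun i : Fin M => (i : ℕ) < a)).card ≤ a := by
    have : (univ.filter (fun i : Fin M => (i : ℕ) < a)).card
        = ((univ.filter (fun i : Fin M => (i : ℕ) < a)).image (fun i : Fin M => (i : ℕ))).card := by
      rw [Finset.card_image_of_injective _ Fin.val_injective]
    rw [this]
    have hsub2 : (univ.filter (fun i : Fin M => (i : ℕ) < a)).image (fun i : Fin M => (i : ℕ))
        ⊆ Finset.range a := by
      intro n hn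
      simp only [Finset.mem_image, mem_filter, mem_univ, true_and] at hn
      rcases hn with ⟨i, hi, rfl⟩
      simpa using hi
    have := Finset.card_le_card hsub2
    simpa using this
  omega

lemma sum_esymm_eq (m : Fin M → ℕ) :
    ∑ k ∈ Finset.range (M + 1), esymm k m = ∏ i, (m i + 1) := by
  have h1 : ∏ i, (m i + 1) = ∑ t ∈ (univ : Finset (Fin M)).powerset, ∏ i ∈ t, m i := by
    rw [Finset.prod_add m (fun _ => 1) univ]
    simp
  rw [h1]
  rw [Finset.sum_powerset]
  rw [Finset.card_univ, Fintype.card_fin]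
  rfl

end RuntimeAux

theorem runtime_monotone_in_majorization_chain {M N : ℕ}
    (n₁ m₁ n₂ m₂ : Fin M → ℕ)
    (hn₁ : Antitone n₁) (hm₁ : Antitone m₁) (hn₂ : Antitone n₂) (hm₂ : Antitone m₂)
    (hs₁ : ∑ i, n₁ i = N) (hs₂ : ∑ i, m₁ i = N)
    (hs₃ : ∑ i, n₂ i = N) (hs₄ : ∑ i, m₂ i = N)
    (h₁ : Maj n₁ m₁) (h₂ : Maj m₁ n₂) (h₃ : Maj n₂ m₂) :
    T n₁ m₁ ≥ T n₂ m₂ := by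
  have hmm : Maj m₁ m₂ := RuntimeAux.maj_trans h₂ h₃
  have hp : ∏ i, (m₂ i + 1) ≤ ∏ i, (m₁ i + 1) := RuntimeAux.prod_le_of_maj hm₁ hmm
  have a1 : alpha m₁ ≤ alpha n₁ := RuntimeAux.alpha_le_of_maj hn₁ h₁
  have a2 : alpha n₂ ≤ alpha m₁ := RuntimeAux.alpha_le_of_maj hm₁ h₂
  have a3 : alpha m₂ ≤ alpha n₂ := RuntimeAux.alpha_le_of_maj hn₂ h₃
  unfold T
  rw [RuntimeAux.sum_esymm_eq, RuntimeAux.sum_esymm_eq]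
  exact Nat.mul_le_mul (Nat.mul_le_mul hp (a2.trans a1)) (a3.trans a2)
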